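/- Let H be a separable real Hilbert space, m ∈ H, and let μ, ν be probability measures on H with ∫ ‖y − m‖^{−2} dμ(y) ≤ C and ∫ ‖y' − m‖^{−2} dν(y') ≤ C for some C > 0. Let π be a probability measure on H × H whose marginals are μ and ν. For w ∈ H let T_w(u) = ⟨w, u⟩ w. Then the Bochner integrals (in the Banach space of continuous linear operators on H) of the rank-one operators satisfy ‖∫ T_{D(m,y)} dμ(y) − ∫ T_{D(m,y')} dν(y')‖ ≤ 4 √C · √(∫ ‖y − y'‖² dπ(y,y')). -/

import Mathlib

open MeasureTheory
open scoped Classical ENNReal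

/-- The unit vector "starting" from `a` in the direction of `b`. -/
noncomputable def unitDir {H : Type*} [NormedAddCommGroup H] [InnerProductSpace ℝ H]
    (a b : H) : H :=
  if b = a then 0 else ‖b - a‖⁻¹ • (b - a)

/-- The rank-one operator `T_w : u ↦ ⟨w, u⟩ w`. -/
noncomputable def rankOne {H : Type*} [NormedAddCommGroup H] [InnerProductSpace ℝ H]
    (w : H) : H →L[ℝ] H :=
  (innerSL ℝ w).smulRight w

section aux
variable {H : Type*} [NormedAddCommGroup H] [InnerProductSpace ℝ H]

lemma rankOne_apply' (w u : H) : rankOne w u = (inner ℝ w u : ℝ) • w := rfl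

lemma continuous_rankOne : Continuous fun w : H => rankOne w := by
  have h1 : Continuous fun w : H => (innerSL ℝ w : H →L[ℝ] ℝ) := (innerSL ℝ).continuous
  exact (ContinuousLinearMap.smulRightL ℝ H H).continuous₂.comp (h1.prodMk continuous_id)
    |>.congr (fun w => rfl)

lemma norm_rankOne_le (w : H) : ‖rankOne w‖ ≤ ‖w‖ * ‖w‖ := by
  refine ContinuousLinearMap.opNorm_le_bound _ (by positivity) fun u => ?_
  rw [rankOne_apply', norm_smul]
  calc ‖(inner ℝ w u : ℝ)‖ * ‖w‖ ≤ (‖w‖ * ‖u‖) * ‖w‖ :=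
        mul_le_mul_of_nonneg_right (norm_inner_le_norm w u) (norm_nonneg _)
    _ = ‖w‖ * ‖w‖ * ‖u‖ := by ring

lemma norm_rankOne_sub (w w' : H) :
    ‖rankOne w - rankOne w'‖ ≤ (‖w‖ + ‖w'‖) * ‖w - w'‖ := by
  refine ContinuousLinearMap.opNorm_le_bound _ (by positivity) fun u => ?_
  have key : (rankOne w - rankOne w') u
      = (inner ℝ (w - w') u : ℝ) • w + (inner ℝ w' u : ℝ) • (w - w') := by
    simp only [ContinuousLinearMap.sub_apply, rankOne_apply', inner_sub_left, sub_smul, smul_sub]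
    module
  rw [key]
  calc ‖(inner ℝ (w - w') u : ℝ) • w + (inner ℝ w' u : ℝ) • (w - w')‖
      ≤ ‖(inner ℝ (w - w') u : ℝ) • w‖ + ‖(inner ℝ w' u : ℝ) • (w - w')‖ := norm_add_le _ _
    _ ≤ (‖w - w'‖ * ‖u‖) * ‖w‖ + (‖w'‖ * ‖u‖) * ‖w - w'‖ := by
        rw [norm_smul, norm_smul]
        exact add_le_add
          (mul_le_mul_of_nonneg_right (norm_inner_le_norm _ _) (norm_nonneg _))
          (mul_le_mul_of_nonneg_right (norm_inner_le_norm _ _) (norm_nonneg _))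
    _ = (‖w‖ + ‖w'‖) * ‖w - w'‖ * ‖u‖ := by ring

lemma norm_unitDir_le (a b : H) : ‖unitDir a b‖ ≤ 1 := by
  unfold unitDir
  split
  · simp
  · rename_i h
    have hba : (0:ℝ) < ‖b - a‖ := by rwa [norm_pos_iff, sub_ne_zero]
    rw [norm_smul, norm_inv, norm_norm, inv_mul_cancel₀ hba.ne']

lemma norm_unitDir_sub_le {a b : H} (h : b ≠ a) (b' : H) :
    ‖unitDir a b - unitDir a b'‖ ≤ 2 * ‖b - b'‖ / ‖b - a‖ := by
  have hba : (0:ℝ) < ‖b - a‖ := by rwa [norm_pos_iff, sub_ne_zero]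
  by_cases h' : b' = a
  · subst h'
    unfold unitDir
    rw [if_neg h, if_pos rfl, sub_zero, norm_smul, norm_inv, norm_norm,
      inv_mul_cancel₀ hba.ne', mul_div_assoc, div_self hba.ne']
    norm_num
  · have hb'a : (0:ℝ) < ‖b' - a‖ := by rwa [norm_pos_iff, sub_ne_zero]
    unfold unitDir
    rw [if_neg h, if_neg h']
    have key : ‖b - a‖⁻¹ • (b - a) - ‖b' - a‖⁻¹ • (b' - a)
        = ‖b - a‖⁻¹ • (b - b') + (‖b - a‖⁻¹ - ‖b' - a‖⁻¹) • (b' - a) := by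
      module
    rw [key]
    have hd : |‖b' - a‖ - ‖b - a‖| ≤ ‖b - b'‖ := by
      have := abs_norm_sub_norm_le (b' - a) (b - a)
      rw [show (b' - a) - (b - a) = b' - b by abel] at this
      simpa [norm_sub_rev] using this
    have h2 : |‖b - a‖⁻¹ - ‖b' - a‖⁻¹| * ‖b' - a‖ ≤ ‖b - b'‖ / ‖b - a‖ := by
      have habs : |‖b - a‖⁻¹ - ‖b' - a‖⁻¹| = |‖b' - a‖ - ‖b - a‖| / (‖b - a‖ * ‖b' - a‖) := by
        rw [inv_sub_inv hba.ne' hb'a.ne', abs_div, abs_of_pos (mul_pos hba hb'a)]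
      rw [habs, div_mul_eq_mul_div, div_le_div_iff₀ (mul_pos hba hb'a) hba]
      calc |‖b' - a‖ - ‖b - a‖| * ‖b' - a‖ * ‖b - a‖
          ≤ ‖b - b'‖ * ‖b' - a‖ * ‖b - a‖ := by gcongr
        _ = ‖b - b'‖ * (‖b - a‖ * ‖b' - a‖) := by ring
    calc ‖‖b - a‖⁻¹ • (b - b') + (‖b - a‖⁻¹ - ‖b' - a‖⁻¹) • (b' - a)‖
        ≤ ‖‖b - a‖⁻¹ • (b - b')‖ + ‖(‖b - a‖⁻¹ - ‖b' - a‖⁻¹) • (b' - a)‖ := norm_add_le _ _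
      _ ≤ ‖b - b'‖ / ‖b - a‖ + ‖b - b'‖ / ‖b - a‖ := by
          refine add_le_add ?_ ?_
          · rw [norm_smul, norm_inv, norm_norm, inv_mul_eq_div]
          · rw [norm_smul, Real.norm_eq_abs]; exact h2
      _ = 2 * ‖b - b'‖ / ‖b - a‖ := by ring

lemma norm_rankOne_unitDir_sub_le {a b : H} (h : b ≠ a) (b' : H) :
    ‖rankOne (unitDir a b) - rankOne (unitDir a b')‖ ≤ 4 * ‖b - b'‖ / ‖b - a‖ := by
  have hba : (0:ℝ) < ‖b - a‖ := by rwa [norm_pos_iff, sub_ne_zero]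
  calc ‖rankOne (unitDir a b) - rankOne (unitDir a b')‖
      ≤ (‖unitDir a b‖ + ‖unitDir a b'‖) * ‖unitDir a b - unitDir a b'‖ :=
        norm_rankOne_sub _ _
    _ ≤ (1 + 1) * (2 * ‖b - b'‖ / ‖b - a‖) := by
        refine mul_le_mul (add_le_add (norm_unitDir_le a b) (norm_unitDir_le a b'))
          (norm_unitDir_sub_le h b') (norm_nonneg _) (by norm_num)
    _ = 4 * ‖b - b'‖ / ‖b - a‖ := by ring

lemma ennreal_pointwise (m : H) (z : H × H) :
    ENNReal.ofReal ‖rankOne (unitDir m z.1) - rankOne (unitDir m z.2)‖ ≤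
      4 * (ENNReal.ofReal ‖z.1 - z.2‖ * (ENNReal.ofReal ‖z.1 - m‖)⁻¹) := by
  by_cases h : z.1 = m
  · by_cases h' : z.2 = m
    · simp [h, h']
    · have h1 : (ENNReal.ofReal ‖z.1 - m‖)⁻¹ = ∞ := by simp [h]
      have h2 : (0:ℝ≥0∞) < ENNReal.ofReal ‖z.1 - z.2‖ := by
        rw [ENNReal.ofReal_pos, norm_pos_iff, sub_ne_zero, h]
        exact fun hh => h' hh.symm
      rw [h1, ENNReal.mul_top h2.ne', ENNReal.mul_top (by norm_num)]
      exact le_top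
  · have hba : (0:ℝ) < ‖z.1 - m‖ := by rwa [norm_pos_iff, sub_ne_zero]
    calc ENNReal.ofReal ‖rankOne (unitDir m z.1) - rankOne (unitDir m z.2)‖
        ≤ ENNReal.ofReal (4 * ‖z.1 - z.2‖ / ‖z.1 - m‖) :=
          ENNReal.ofReal_le_ofReal (norm_rankOne_unitDir_sub_le h z.2)
      _ = 4 * (ENNReal.ofReal ‖z.1 - z.2‖ * (ENNReal.ofReal ‖z.1 - m‖)⁻¹) := by
          rw [mul_div_assoc, div_eq_mul_inv, ENNReal.ofReal_mul (by norm_num),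
            ENNReal.ofReal_mul (norm_nonneg _), ← ENNReal.ofReal_inv_of_pos hba]
          norm_num

end aux

/-- If `μ, ν` are probability measures on a separable real Hilbert space whose inverse
second moments about `m` are bounded by `C`, and `π` is a coupling of `μ` and `ν`, then
the Bochner integrals of the rank-one operators `T_{D(m,·)}` satisfy
`‖∫ T_{D(m,y)} dμ(y) − ∫ T_{D(m,y')} dν(y')‖ ≤ 4 √C √(∫ ‖y − y'‖² dπ)`. -/
theorem norm_integral_rankOne_unitDir_sub_le
    {H : Type*} [NormedAddCommGroup H] [InnerProductSpace ℝ H] [CompleteSpace H]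
    [MeasurableSpace H] [BorelSpace H] [SecondCountableTopology H]
    (m : H) (C : ℝ) (hC : 0 < C)
    (μ ν : Measure H) [IsProbabilityMeasure μ] [IsProbabilityMeasure ν]
    (hμm : ∫⁻ y, ((ENNReal.ofReal ‖y - m‖) ^ 2)⁻¹ ∂μ ≤ ENNReal.ofReal C)
    (hνm : ∫⁻ y', ((ENNReal.ofReal ‖y' - m‖) ^ 2)⁻¹ ∂ν ≤ ENNReal.ofReal C)
    (π : Measure (H × H)) [IsProbabilityMeasure π]
    (hπ1 : π.map Prod.fst = μ) (hπ2 : π.map Prod.snd = ν) :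
    ENNReal.ofReal ‖(∫ y, rankOne (unitDir m y) ∂μ) - ∫ y', rankOne (unitDir m y') ∂ν‖ ≤
      ENNReal.ofReal (4 * Real.sqrt C) *
        (∫⁻ z, ENNReal.ofReal (‖z.1 - z.2‖ ^ 2) ∂π) ^ (1/2 : ℝ) := by
  set g : H → (H →L[ℝ] H) := fun y => rankOne (unitDir m y) with hg_def
  have hum : Measurable fun y : H => unitDir m y := by
    unfold unitDir
    refine Measurable.ite (measurableSet_eq) measurable_const ?_
    exact ((measurable_id.sub_const m).norm.inv).smul (measurable_id.sub_const m)
  have hgs : StronglyMeasurable g :=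
    continuous_rankOne.comp_stronglyMeasurable hum.stronglyMeasurable
  have hgbound : ∀ y, ‖g y‖ ≤ 1 := by
    intro y
    refine le_trans (norm_rankOne_le _) ?_
    have := norm_unitDir_le m y
    nlinarith [norm_nonneg (unitDir m y)]
  have hint : ∀ (ρ : Measure H) [IsProbabilityMeasure ρ], Integrable g ρ := by
    intro ρ _
    exact (integrable_const (1:ℝ)).mono' hgs.aestronglyMeasurable
      (ae_of_all _ fun y => by simpa using hgbound y)
  -- move everything to π
  have e1 : ∫ y, g y ∂μ = ∫ z, g z.1 ∂π := by
    rw [← hπ1, integral_map measurable_fst.aemeasurable hgs.aestronglyMeasurable]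
  have e2 : ∫ y', g y' ∂ν = ∫ z, g z.2 ∂π := by
    rw [← hπ2, integral_map measurable_snd.aemeasurable hgs.aestronglyMeasurable]
  have hint1 : Integrable (fun z : H × H => g z.1) π := by
    refine (integrable_const (1:ℝ)).mono'
      ((hgs.comp_measurable measurable_fst).aestronglyMeasurable)
      (ae_of_all _ fun z => by simpa using hgbound z.1)
  have hint2 : Integrable (fun z : H × H => g z.2) π := by
    refine (integrable_const (1:ℝ)).mono'
      ((hgs.comp_measurable measurable_snd).aestronglyMeasurable)
      (ae_of_all _ fun z => by simpa using hgbound z.2)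
  have esub : (∫ y, g y ∂μ) - ∫ y', g y' ∂ν = ∫ z, (g z.1 - g z.2) ∂π := by
    rw [e1, e2, ← integral_sub hint1 hint2]
  rw [esub]
  -- step 1: norm of integral ≤ lintegral of norms
  have step1 : ENNReal.ofReal ‖∫ z, (g z.1 - g z.2) ∂π‖ ≤
      ∫⁻ z, ENNReal.ofReal ‖g z.1 - g z.2‖ ∂π := by
    rw [ofReal_norm]
    refine le_trans (enorm_integral_le_lintegral_enorm _) ?_
    simp_rw [ofReal_norm]
    exact le_rfl
  -- measurable auxiliary functions
  set f : H × H → ℝ≥0∞ := fun z => ENNReal.ofReal ‖z.1 - z.2‖ with hf_def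
  set q : H × H → ℝ≥0∞ := fun z => (ENNReal.ofReal ‖z.1 - m‖)⁻¹ with hq_def
  have hfm : Measurable f :=
    (measurable_fst.sub measurable_snd).norm.ennreal_ofReal
  have hqm : Measurable q :=
    ((measurable_fst.sub_const m).norm.ennreal_ofReal).inv
  -- step 2: pointwise bound and pull out constant
  have step2 : (∫⁻ z, ENNReal.ofReal ‖g z.1 - g z.2‖ ∂π) ≤ 4 * ∫⁻ z, f z * q z ∂π := by
    rw [← lintegral_const_mul' _ _ (by norm_num : (4:ℝ≥0∞) ≠ ∞)]
    exact lintegral_mono fun z => ennreal_pointwise m z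
  -- step 3: Hölder
  have hconj : Real.HolderConjugate 2 2 := by constructor <;> norm_num
  have step3 : (∫⁻ z, f z * q z ∂π) ≤
      (∫⁻ z, f z ^ (2:ℝ) ∂π) ^ (1/2 : ℝ) * (∫⁻ z, q z ^ (2:ℝ) ∂π) ^ (1/2 : ℝ) := by
    have := ENNReal.lintegral_mul_le_Lp_mul_Lq π hconj hfm.aemeasurable hqm.aemeasurable
    simpa using this
  -- identify the two factors
  have hfsq : (∫⁻ z, f z ^ (2:ℝ) ∂π) = ∫⁻ z, ENNReal.ofReal (‖z.1 - z.2‖ ^ 2) ∂π := by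
    refine lintegral_congr fun z => ?_
    show ENNReal.ofReal ‖z.1 - z.2‖ ^ (2:ℝ) = ENNReal.ofReal (‖z.1 - z.2‖ ^ 2)
    rw [show (2:ℝ) = ((2:ℕ):ℝ) by norm_num, ENNReal.rpow_natCast,
      ENNReal.ofReal_pow (norm_nonneg _)]
  have hqsq : (∫⁻ z, q z ^ (2:ℝ) ∂π) ≤ ENNReal.ofReal C := by
    have h1 : (∫⁻ z, q z ^ (2:ℝ) ∂π) = ∫⁻ z, ((ENNReal.ofReal ‖z.1 - m‖) ^ 2)⁻¹ ∂π := by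
      refine lintegral_congr fun z => ?_
      show (ENNReal.ofReal ‖z.1 - m‖)⁻¹ ^ (2:ℝ) = ((ENNReal.ofReal ‖z.1 - m‖) ^ 2)⁻¹
      rw [ENNReal.inv_rpow, show (2:ℝ) = ((2:ℕ):ℝ) by norm_num, ENNReal.rpow_natCast]
    rw [h1]
    have hmeasq : Measurable fun y : H => ((ENNReal.ofReal ‖y - m‖) ^ 2)⁻¹ :=
      (((measurable_id'.sub_const m).norm.ennreal_ofReal).pow_const 2).inv
    have hmap : (∫⁻ z : H × H, ((ENNReal.ofReal ‖z.1 - m‖) ^ 2)⁻¹ ∂π)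
        = ∫⁻ y, ((ENNReal.ofReal ‖y - m‖) ^ 2)⁻¹ ∂μ := by
      rw [← hπ1, lintegral_map hmeasq measurable_fst]
    rw [hmap]
    exact hμm
  -- put it together
  calc ENNReal.ofReal ‖∫ z, (g z.1 - g z.2) ∂π‖
      ≤ ∫⁻ z, ENNReal.ofReal ‖g z.1 - g z.2‖ ∂π := step1
    _ ≤ 4 * ∫⁻ z, f z * q z ∂π := step2
    _ ≤ 4 * ((∫⁻ z, f z ^ (2:ℝ) ∂π) ^ (1/2 : ℝ) * (∫⁻ z, q z ^ (2:ℝ) ∂π) ^ (1/2 : ℝ)) := by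
        gcongr
    _ ≤ 4 * ((∫⁻ z, ENNReal.ofReal (‖z.1 - z.2‖ ^ 2) ∂π) ^ (1/2 : ℝ)
          * (ENNReal.ofReal C) ^ (1/2 : ℝ)) := by
        rw [hfsq]
        gcongr
    _ = ENNReal.ofReal (4 * Real.sqrt C) *
        (∫⁻ z, ENNReal.ofReal (‖z.1 - z.2‖ ^ 2) ∂π) ^ (1/2 : ℝ) := by
        rw [ENNReal.ofReal_mul (by norm_num), Real.sqrt_eq_rpow,
          ENNReal.ofReal_rpow_of_pos hC]
        rw [show ENNReal.ofReal (4:ℝ) = 4 by norm_num]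
        ring
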